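/- The set P(n) of clopen subsets of J_n, partially ordered by inclusion, is a lattice, with meet x ∧ y = int(x ∩ y) and join x ∨ y = cl(x ∪ y). -/

import Mathlib

/-- `J_n = {(i,j) : 1 ≤ i < j ≤ n}`. -/
def JnS (n : ℕ) : Set (ℕ × ℕ) := {p | 1 ≤ p.1 ∧ p.1 < p.2 ∧ p.2 ≤ n}

/-- Transitivity of a set of pairs, viewed as a binary relation. -/
def TransSet (x : Set (ℕ × ℕ)) : Prop := ∀ i j k : ℕ, (i, j) ∈ x → (j, k) ∈ x → (i, k) ∈ x

/-- A subset of `J_n` is closed if it is transitive. -/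
def ClosedIn (n : ℕ) (x : Set (ℕ × ℕ)) : Prop := x ⊆ JnS n ∧ TransSet x

/-- A subset of `J_n` is clopen if both it and its complement in `J_n` are closed. -/
def ClopenIn (n : ℕ) (x : Set (ℕ × ℕ)) : Prop := ClosedIn n x ∧ ClosedIn n (JnS n \ x)

/-- The transitive closure of a set of pairs. -/
def clS (x : Set (ℕ × ℕ)) : Set (ℕ × ℕ) :=
  {p | Relation.TransGen (fun a b => (a, b) ∈ x) p.1 p.2}

/-- The interior: the largest open subset of `x`, i.e. the complement in `J_n`
of the closure of the complement of `x`. -/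
def intS (n : ℕ) (x : Set (ℕ × ℕ)) : Set (ℕ × ℕ) := JnS n \ clS (JnS n \ x)

lemma JnS_trans (n : ℕ) : TransSet (JnS n) := by
  rintro i j k ⟨h1, h2, _⟩ ⟨_, g2, g3⟩
  exact ⟨h1, h2.trans g2, g3⟩

lemma subset_clS (x : Set (ℕ × ℕ)) : x ⊆ clS x := by
  rintro ⟨a, b⟩ h
  exact Relation.TransGen.single h

lemma clS_subset {x s : Set (ℕ × ℕ)} (hxs : x ⊆ s) (hs : TransSet s) : clS x ⊆ s := by
  rintro ⟨a, b⟩ h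
  simp only [clS, Set.mem_setOf_eq] at h
  induction h with
  | single h => exact hxs h
  | tail _ h ih => exact hs _ _ _ ih (hxs h)

/-- The splitting property: half of being "open". -/
def Splits (n : ℕ) (x : Set (ℕ × ℕ)) : Prop :=
  ∀ i j k, (i, k) ∈ x → (i, j) ∈ JnS n → (j, k) ∈ JnS n → (i, j) ∈ x ∨ (j, k) ∈ x

lemma splits_of_clopen {n : ℕ} {x : Set (ℕ × ℕ)} (hx : ClopenIn n x) : Splits n x := by
  intro i j k hik hij hjk
  by_contra h
  push_neg at h
  exact (hx.2.2 i j k ⟨hij, h.1⟩ ⟨hjk, h.2⟩).2 hik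

lemma splits_clS_union {n : ℕ} {x y : Set (ℕ × ℕ)} (hx : ClopenIn n x) (hy : ClopenIn n y) :
    Splits n (clS (x ∪ y)) := by
  intro i j k hik hij hjk
  have hsub : x ∪ y ⊆ JnS n := Set.union_subset hx.1.1 hy.1.1
  have hsplit : Splits n (x ∪ y) := by
    intro a b c hac hab hbc
    rcases hac with h | h
    · rcases splits_of_clopen hx a b c h hab hbc with h' | h'
      · exact Or.inl (Or.inl h')
      · exact Or.inr (Or.inl h')
    · rcases splits_of_clopen hy a b c h hab hbc with h' | h'
      · exact Or.inl (Or.inr h')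
      · exact Or.inr (Or.inr h')
  simp only [clS, Set.mem_setOf_eq] at hik ⊢
  revert hij
  induction hik using Relation.TransGen.head_induction_on with
  | single h =>
    intro hij
    rcases hsplit _ j _ h hij hjk with h' | h'
    · exact Or.inl (Relation.TransGen.single h')
    · exact Or.inr (Relation.TransGen.single h')
  | @head a c hstep htail ihp =>
    intro hij
    rcases lt_trichotomy c j with hcj | hcj | hcj
    · -- c < j : use IH at c
      have hcjJ : (c, j) ∈ JnS n :=
        ⟨le_of_lt (lt_of_le_of_lt (hsub hstep).1 (hsub hstep).2.1), hcj, hij.2.2⟩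
      rcases ihp hcjJ with h' | h'
      · exact Or.inl (Relation.TransGen.head hstep h')
      · exact Or.inr h'
    · subst hcj
      exact Or.inl (Relation.TransGen.single hstep)
    · -- j < c : split the first step
      have hjcJ : (j, c) ∈ JnS n := ⟨hjk.1, hcj, (hsub hstep).2.2⟩
      rcases hsplit _ j _ hstep hij hjcJ with h' | h'
      · exact Or.inl (Relation.TransGen.single h')
      · exact Or.inr (Relation.TransGen.head h' htail)

lemma clopen_clS_union {n : ℕ} {x y : Set (ℕ × ℕ)} (hx : ClopenIn n x) (hy : ClopenIn n y) :
    ClopenIn n (clS (x ∪ y)) := by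
  have hsub : clS (x ∪ y) ⊆ JnS n :=
    clS_subset (Set.union_subset hx.1.1 hy.1.1) (JnS_trans n)
  refine ⟨⟨hsub, ?_⟩, Set.diff_subset, ?_⟩
  · intro i j k h1 h2
    exact Relation.TransGen.trans h1 h2
  · intro i j k h1 h2
    refine ⟨JnS_trans n i j k h1.1 h2.1, fun hc => ?_⟩
    rcases splits_clS_union hx hy i j k hc h1.1 h2.1 with h | h
    · exact h1.2 h
    · exact h2.2 h

lemma clopen_compl {n : ℕ} {x : Set (ℕ × ℕ)} (hx : ClopenIn n x) :
    ClopenIn n (JnS n \ x) :=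
  ⟨hx.2, by rw [Set.diff_diff_cancel_left hx.1.1]; exact hx.1⟩

/-- The permutohedron `P(n)` — clopen subsets of `J_n` ordered by inclusion — is a lattice,
with meet `x ∧ y = int (x ∩ y)` and join `x ∨ y = cl (x ∪ y)`: `int (x ∩ y)` is the greatest
clopen set below both `x` and `y`, and `cl (x ∪ y)` is the least clopen set above both. -/
theorem stmt2 (n : ℕ) (x y : Set (ℕ × ℕ)) (hx : ClopenIn n x) (hy : ClopenIn n y) :
    IsGreatest {z | ClopenIn n z ∧ z ⊆ x ∧ z ⊆ y} (intS n (x ∩ y)) ∧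
    IsLeast {z | ClopenIn n z ∧ x ⊆ z ∧ y ⊆ z} (clS (x ∪ y)) := by
  have hxc := clopen_compl hx
  have hyc := clopen_compl hy
  constructor
  · -- greatest
    set c := clS ((JnS n \ x) ∪ (JnS n \ y)) with hc
    have key : ClopenIn n c := clopen_clS_union hxc hyc
    have hEq : intS n (x ∩ y) = JnS n \ c := by
      unfold intS
      rw [Set.diff_inter]
    rw [hEq]
    have hsubx : JnS n \ c ⊆ x := by
      have h1 : JnS n \ x ⊆ c := (Set.subset_union_left).trans (subset_clS _)
      have h2 : JnS n \ c ⊆ JnS n \ (JnS n \ x) := Set.diff_subset_diff_right h1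
      rwa [Set.diff_diff_cancel_left hx.1.1] at h2
    have hsuby : JnS n \ c ⊆ y := by
      have h1 : JnS n \ y ⊆ c := (Set.subset_union_right).trans (subset_clS _)
      have h2 : JnS n \ c ⊆ JnS n \ (JnS n \ y) := Set.diff_subset_diff_right h1
      rwa [Set.diff_diff_cancel_left hy.1.1] at h2
    refine ⟨⟨clopen_compl key, hsubx, hsuby⟩, ?_⟩
    rintro z ⟨hz, hzx, hzy⟩
    have hcz : c ⊆ JnS n \ z := by
      apply clS_subset _ hz.2.2
      exact Set.union_subset (Set.diff_subset_diff_right hzx) (Set.diff_subset_diff_right hzy)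
    intro p hp
    exact ⟨hz.1.1 hp, fun hpc => (hcz hpc).2 hp⟩
  · -- least
    refine ⟨⟨clopen_clS_union hx hy,
      (Set.subset_union_left).trans (subset_clS _),
      (Set.subset_union_right).trans (subset_clS _)⟩, ?_⟩
    rintro z ⟨hz, hxz, hyz⟩
    exact clS_subset (Set.union_subset hxz hyz) hz.1.2
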